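/- Let (a, b) be a CAR pair in a unital complex Banach *-algebra R and let α, β, γ, δ, h ∈ ℝ. Define B(α,β,γ,δ) := α • (star a * a)(star b * b) + β • (a * star a)(star b * b) + γ • (star a * a)(b * star b) + δ • (a * star a)(b * star b). Then exp(h • B(α,β,γ,δ)) = B(e^{hα}, e^{hβ}, e^{hγ}, e^{hδ}). -/

import Mathlib

namespace CARMarkov

/-- A CAR pair in a unital *-algebra: two anticommuting fermionic generators. -/
structure IsCARPair {R : Type*} [Ring R] [StarRing R] (a b : R) : Prop where
  sq_a : a * a = 0
  sq_b : b * b = 0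
  car_a : star a * a + a * star a = 1
  car_b : star b * b + b * star b = 1
  anti_ab : a * b + b * a = 0
  anti_a_bstar : a * star b + star b * a = 0
  anti_astar_b : star a * b + b * star a = 0
  anti_astar_bstar : star a * star b + star b * star a = 0

/-- The diagonal operator `B(α,β,γ,δ)` of Example 6.1 of the paper. -/
noncomputable def B {R : Type*} [Ring R] [Algebra ℂ R] [StarRing R]
    (a b : R) (α β γ δ : ℝ) : R :=
  (α : ℂ) • ((star a * a) * (star b * b)) + (β : ℂ) • ((a * star a) * (star b * b))
    + (γ : ℂ) • ((star a * a) * (b * star b)) + (δ : ℂ) • ((a * star a) * (b * star b))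

section Aux

variable {R : Type*} [NormedRing R] [NormedAlgebra ℂ R] [CompleteSpace R]

/-- Exponential of a complex multiple of an idempotent. -/
lemma exp_smul_idem (e : R) (he : e * e = e) (c : ℂ) :
    NormedSpace.exp (c • e) = 1 + (Complex.exp c - 1) • e := by
  have hepow : ∀ n : ℕ, e ^ (n + 1) = e := by
    intro n
    induction n with
    | zero => simp
    | succ n ih => rw [pow_succ, ih, he]
  have hsum : Summable fun n : ℕ => ((Nat.factorial n : ℕ) : ℂ)⁻¹ • (c • e) ^ n :=
    NormedSpace.expSeries_summable' (c • e)
  have hsc : Summable fun n : ℕ => ((Nat.factorial n : ℕ) : ℂ)⁻¹ * c ^ n := by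
    simpa [smul_eq_mul] using NormedSpace.expSeries_summable' (𝕂 := ℂ) c
  have hsc' : Summable fun n : ℕ => ((Nat.factorial (n+1) : ℕ) : ℂ)⁻¹ * c ^ (n + 1) :=
    hsc.comp_injective Nat.succ_injective
  rw [NormedSpace.exp_eq_tsum ℂ]
  simp only []
  rw [Summable.tsum_eq_zero_add hsum]
  have h1 : (∑' n : ℕ, ((Nat.factorial (n+1) : ℕ) : ℂ)⁻¹ • (c • e) ^ (n + 1))
      = (∑' n : ℕ, ((Nat.factorial (n+1) : ℕ) : ℂ)⁻¹ * c ^ (n + 1)) • e := by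
    rw [← Summable.tsum_smul_const hsc']
    congr 1; ext n
    rw [smul_pow, hepow, smul_smul]
  have h2 : (∑' n : ℕ, ((Nat.factorial (n+1) : ℕ) : ℂ)⁻¹ * c ^ (n + 1))
      = Complex.exp c - 1 := by
    have := Summable.tsum_eq_zero_add hsc
    rw [Complex.exp_eq_exp_ℂ, NormedSpace.exp_eq_tsum ℂ]
    simp only [smul_eq_mul] at this ⊢
    rw [this]; simp
  simp only [h1, h2, pow_zero]
  norm_num

lemma exp_add_of_commute_ℂ {x y : R} (hxy : Commute x y) :
    NormedSpace.exp (x + y) = NormedSpace.exp x * NormedSpace.exp y :=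
  NormedSpace.exp_add_of_commute_of_mem_ball (𝕂 := ℂ) hxy
    ((NormedSpace.expSeries_radius_eq_top ℂ R).symm ▸ edist_lt_top _ _)
    ((NormedSpace.expSeries_radius_eq_top ℂ R).symm ▸ edist_lt_top _ _)

/-- Exponential of a diagonal combination of four pairwise-orthogonal idempotents
summing to one. -/
lemma exp_four_idem (e₁ e₂ e₃ e₄ : R)
    (h11 : e₁ * e₁ = e₁) (h22 : e₂ * e₂ = e₂) (h33 : e₃ * e₃ = e₃) (h44 : e₄ * e₄ = e₄)
    (h12 : e₁ * e₂ = 0) (h21 : e₂ * e₁ = 0)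
    (h13 : e₁ * e₃ = 0) (h31 : e₃ * e₁ = 0)
    (h14 : e₁ * e₄ = 0) (h41 : e₄ * e₁ = 0)
    (h23 : e₂ * e₃ = 0) (h32 : e₃ * e₂ = 0)
    (h24 : e₂ * e₄ = 0) (h42 : e₄ * e₂ = 0)
    (h34 : e₃ * e₄ = 0) (h43 : e₄ * e₃ = 0)
    (hsum : e₁ + e₂ + e₃ + e₄ = 1) (c₁ c₂ c₃ c₄ : ℂ) :
    NormedSpace.exp (c₁ • e₁ + c₂ • e₂ + c₃ • e₃ + c₄ • e₄)
      = Complex.exp c₁ • e₁ + Complex.exp c₂ • e₂ + Complex.exp c₃ • e₃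
        + Complex.exp c₄ • e₄ := by
  have comm : ∀ (x y : R) (cx cy : ℂ), x * y = 0 → y * x = 0 →
      Commute (cx • x) (cy • y) := by
    intro x y cx cy hxy hyx
    simp [Commute, SemiconjBy, smul_mul_smul_comm, hxy, hyx]
  have c12 : Commute (c₁ • e₁) (c₂ • e₂) := comm _ _ _ _ h12 h21
  have c13 : Commute (c₁ • e₁) (c₃ • e₃) := comm _ _ _ _ h13 h31
  have c14 : Commute (c₁ • e₁) (c₄ • e₄) := comm _ _ _ _ h14 h41
  have c23 : Commute (c₂ • e₂) (c₃ • e₃) := comm _ _ _ _ h23 h32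
  have c24 : Commute (c₂ • e₂) (c₄ • e₄) := comm _ _ _ _ h24 h42
  have c34 : Commute (c₃ • e₃) (c₄ • e₄) := comm _ _ _ _ h34 h43
  rw [exp_add_of_commute_ℂ ((c14.add_left c24).add_left c34),
      exp_add_of_commute_ℂ (c13.add_left c23),
      exp_add_of_commute_ℂ c12]
  rw [exp_smul_idem e₁ h11, exp_smul_idem e₂ h22, exp_smul_idem e₃ h33,
      exp_smul_idem e₄ h44]
  set d₁ := Complex.exp c₁ - 1 with hd₁
  set d₂ := Complex.exp c₂ - 1 with hd₂
  set d₃ := Complex.exp c₃ - 1 with hd₃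
  set d₄ := Complex.exp c₄ - 1 with hd₄
  have expand : (1 + d₁ • e₁) * (1 + d₂ • e₂) * (1 + d₃ • e₃) * (1 + d₄ • e₄)
      = 1 + d₁ • e₁ + d₂ • e₂ + d₃ • e₃ + d₄ • e₄ := by
    simp only [mul_add, add_mul, mul_one, one_mul, smul_mul_smul_comm,
      h12, h13, h14, h23, h24, h34, smul_zero, mul_zero, zero_mul, add_zero,
      zero_smul]
  rw [expand, ← hsum]
  have E1 : Complex.exp c₁ = d₁ + 1 := by rw [hd₁]; ring
  have E2 : Complex.exp c₂ = d₂ + 1 := by rw [hd₂]; ring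
  have E3 : Complex.exp c₃ = d₃ + 1 := by rw [hd₃]; ring
  have E4 : Complex.exp c₄ = d₄ + 1 := by rw [hd₄]; ring
  rw [E1, E2, E3, E4]
  simp only [add_smul, one_smul]
  abel

end Aux

/-- If `x` anticommutes with `y` and `z`, it commutes with `y * z`. -/
lemma anticomm_mul {R : Type*} [Ring R] (x y z : R)
    (hxy : x * y + y * x = 0) (hxz : x * z + z * x = 0) :
    x * (y * z) = (y * z) * x := by
  have h1 : x * y = -(y * x) := eq_neg_of_add_eq_zero_left hxy
  have h2 : x * z = -(z * x) := eq_neg_of_add_eq_zero_left hxz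
  rw [← mul_assoc, h1, neg_mul, mul_assoc, h2, mul_neg, neg_neg, ← mul_assoc]

/-- If `x` and `y` both commute with `q`, so does `x * y`. -/
lemma comm_mul {R : Type*} [Ring R] (x y q : R)
    (hx : x * q = q * x) (hy : y * q = q * y) :
    (x * y) * q = q * (x * y) := by
  rw [mul_assoc, hy, ← mul_assoc, hx, mul_assoc]

lemma mul_mul_mul_comm' {R : Type*} [Ring R] (p q r s : R) (hqr : q * r = r * q) :
    (p * q) * (r * s) = (p * r) * (q * s) := by
  rw [mul_assoc, ← mul_assoc q r s, hqr, mul_assoc r q s, ← mul_assoc]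

/-- The exponential of `h • B(α,β,γ,δ)` is `B(e^{hα}, e^{hβ}, e^{hγ}, e^{hδ})`. -/
theorem exp_B {R : Type*} [NormedRing R] [NormedAlgebra ℂ R] [CompleteSpace R]
    [StarRing R] (a b : R) (hcar : IsCARPair a b) (α β γ δ h : ℝ) :
    NormedSpace.exp ((h : ℂ) • B a b α β γ δ)
      = B a b (Real.exp (h * α)) (Real.exp (h * β))
          (Real.exp (h * γ)) (Real.exp (h * δ)) := by
  set p : R := star a * a with hp
  set p' : R := a * star a with hp'
  set q : R := star b * b with hq
  set q' : R := b * star b with hq'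
  -- squares of stars vanish
  have hsa : (star a : R) * star a = 0 := by
    rw [← star_mul, hcar.sq_a, star_zero]
  have hsb : (star b : R) * star b = 0 := by
    rw [← star_mul, hcar.sq_b, star_zero]
  -- orthogonality within each pair
  have hpp' : p * p' = 0 := by
    rw [hp, hp', mul_assoc, ← mul_assoc a a, hcar.sq_a, zero_mul, mul_zero]
  have hp'p : p' * p = 0 := by
    rw [hp, hp', mul_assoc, ← mul_assoc (star a) (star a), hsa, zero_mul, mul_zero]
  have hqq' : q * q' = 0 := by
    rw [hq, hq', mul_assoc, ← mul_assoc b b, hcar.sq_b, zero_mul, mul_zero]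
  have hq'q : q' * q = 0 := by
    rw [hq, hq', mul_assoc, ← mul_assoc (star b) (star b), hsb, zero_mul, mul_zero]
  -- idempotency
  have hp2 : p * p = p := by
    have := congrArg (fun x => p * x) hcar.car_a
    simpa [mul_add, ← hp, ← hp', hpp'] using this
  have hp'2 : p' * p' = p' := by
    have := congrArg (fun x => p' * x) hcar.car_a
    simpa [mul_add, ← hp, ← hp', hp'p] using this
  have hq2 : q * q = q := by
    have := congrArg (fun x => q * x) hcar.car_b
    simpa [mul_add, ← hq, ← hq', hqq'] using this
  have hq'2 : q' * q' = q' := by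
    have := congrArg (fun x => q' * x) hcar.car_b
    simpa [mul_add, ← hq, ← hq', hq'q] using this
  -- commutation between the `a`-side projections and the `b`-side projections
  have haq : a * q = q * a := anticomm_mul a (star b) b hcar.anti_a_bstar hcar.anti_ab
  have haq' : a * q' = q' * a := anticomm_mul a b (star b) hcar.anti_ab hcar.anti_a_bstar
  have hsaq : (star a : R) * q = q * star a :=
    anticomm_mul (star a) (star b) b hcar.anti_astar_bstar hcar.anti_astar_b
  have hsaq' : (star a : R) * q' = q' * star a :=
    anticomm_mul (star a) b (star b) hcar.anti_astar_b hcar.anti_astar_bstar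
  have hpq : p * q = q * p := comm_mul _ _ _ hsaq haq
  have hpq' : p * q' = q' * p := comm_mul _ _ _ hsaq' haq'
  have hp'q : p' * q = q * p' := comm_mul _ _ _ haq hsaq
  have hp'q' : p' * q' = q' * p' := comm_mul _ _ _ haq' hsaq'
  -- the four orthogonal idempotents
  have h11 : (p * q) * (p * q) = p * q := by
    rw [mul_mul_mul_comm' _ _ _ _ hpq.symm, hp2, hq2]
  have h22 : (p' * q) * (p' * q) = p' * q := by
    rw [mul_mul_mul_comm' _ _ _ _ hp'q.symm, hp'2, hq2]
  have h33 : (p * q') * (p * q') = p * q' := by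
    rw [mul_mul_mul_comm' _ _ _ _ hpq'.symm, hp2, hq'2]
  have h44 : (p' * q') * (p' * q') = p' * q' := by
    rw [mul_mul_mul_comm' _ _ _ _ hp'q'.symm, hp'2, hq'2]
  have h12 : (p * q) * (p' * q) = 0 := by
    rw [mul_mul_mul_comm' _ _ _ _ hp'q.symm, hpp', zero_mul]
  have h21 : (p' * q) * (p * q) = 0 := by
    rw [mul_mul_mul_comm' _ _ _ _ hpq.symm, hp'p, zero_mul]
  have h13 : (p * q) * (p * q') = 0 := by
    rw [mul_mul_mul_comm' _ _ _ _ hpq.symm, hp2, hqq', mul_zero]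
  have h31 : (p * q') * (p * q) = 0 := by
    rw [mul_mul_mul_comm' _ _ _ _ hpq'.symm, hp2, hq'q, mul_zero]
  have h14 : (p * q) * (p' * q') = 0 := by
    rw [mul_mul_mul_comm' _ _ _ _ hp'q.symm, hpp', zero_mul]
  have h41 : (p' * q') * (p * q) = 0 := by
    rw [mul_mul_mul_comm' _ _ _ _ hpq'.symm, hp'p, zero_mul]
  have h23 : (p' * q) * (p * q') = 0 := by
    rw [mul_mul_mul_comm' _ _ _ _ hpq.symm, hp'p, zero_mul]
  have h32 : (p * q') * (p' * q) = 0 := by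
    rw [mul_mul_mul_comm' _ _ _ _ hp'q'.symm, hpp', zero_mul]
  have h24 : (p' * q) * (p' * q') = 0 := by
    rw [mul_mul_mul_comm' _ _ _ _ hp'q.symm, hp'2, hqq', mul_zero]
  have h42 : (p' * q') * (p' * q) = 0 := by
    rw [mul_mul_mul_comm' _ _ _ _ hp'q'.symm, hp'2, hq'q, mul_zero]
  have h34 : (p * q') * (p' * q') = 0 := by
    rw [mul_mul_mul_comm' _ _ _ _ hp'q'.symm, hpp', zero_mul]
  have h43 : (p' * q') * (p * q') = 0 := by
    rw [mul_mul_mul_comm' _ _ _ _ hpq'.symm, hp'p, zero_mul]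
  have hsum : (p * q) + (p' * q) + (p * q') + (p' * q') = 1 := by
    have expand : (p * q) + (p' * q) + (p * q') + (p' * q') = (p + p') * (q + q') := by
      rw [add_mul, mul_add, mul_add]
      abel
    rw [expand, hp, hp', hq, hq', hcar.car_a, hcar.car_b, one_mul]
  -- rewrite the LHS and apply the key lemma
  have hB : (h : ℂ) • B a b α β γ δ
      = ((h : ℂ) * (α : ℂ)) • (p * q) + ((h : ℂ) * (β : ℂ)) • (p' * q)
        + ((h : ℂ) * (γ : ℂ)) • (p * q') + ((h : ℂ) * (δ : ℂ)) • (p' * q') := by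
    simp only [B, hp, hp', hq, hq', smul_add, smul_smul]
  rw [hB, exp_four_idem (p * q) (p' * q) (p * q') (p' * q') h11 h22 h33 h44 h12 h21
      h13 h31 h14 h41 h23 h32 h24 h42 h34 h43 hsum]
  have hA1 : ((Real.exp (h * α) : ℝ) : ℂ) = Complex.exp ((h : ℂ) * (α : ℂ)) := by
    rw [Complex.ofReal_exp, Complex.ofReal_mul]
  have hA2 : ((Real.exp (h * β) : ℝ) : ℂ) = Complex.exp ((h : ℂ) * (β : ℂ)) := by
    rw [Complex.ofReal_exp, Complex.ofReal_mul]
  have hA3 : ((Real.exp (h * γ) : ℝ) : ℂ) = Complex.exp ((h : ℂ) * (γ : ℂ)) := by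
    rw [Complex.ofReal_exp, Complex.ofReal_mul]
  have hA4 : ((Real.exp (h * δ) : ℝ) : ℂ) = Complex.exp ((h : ℂ) * (δ : ℂ)) := by
    rw [Complex.ofReal_exp, Complex.ofReal_mul]
  simp only [B, hp, hp', hq, hq', hA1, hA2, hA3, hA4]

end CARMarkov
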